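/- Let Eᵃ_α and Eᵇ_β be dichotomic qubit observables Eᵃ_α(±) = ½(α·1 ± a·σ), Eᵇ_β(±) = ½(β·1 ± b·σ), and let γ ∈ ℝ, g ∈ ℝ³. Define G(+,+) = ½(γ·1 + g·σ), G(+,−) = Eᵃ_α(+) − G(+,+), G(−,+) = Eᵇ_β(+) − G(+,+), G(−,−) = 1 + G(+,+) − Eᵃ_α(+) − Eᵇ_β(+). Then all four operators G(·,·) are positive semidefinite if and only if ‖g‖ ≤ γ, ‖a−g‖ ≤ α−γ, ‖b−g‖ ≤ β−γ, and ‖a+b−g‖ ≤ 2+γ−α−β. -/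

import Mathlib

noncomputable section

open Complex
open scoped ComplexOrder

/-- The Pauli matrices. -/
def σ1 : Matrix (Fin 2) (Fin 2) ℂ := !![0, 1; 1, 0]
def σ2 : Matrix (Fin 2) (Fin 2) ℂ := !![0, -Complex.I; Complex.I, 0]
def σ3 : Matrix (Fin 2) (Fin 2) ℂ := !![1, 0; 0, -1]

/-- `v ⋅ σ` for a real vector `v ∈ ℝ³`. -/
def dotσ (v : EuclideanSpace ℝ (Fin 3)) : Matrix (Fin 2) (Fin 2) ℂ :=
  (v 0 : ℂ) • σ1 + (v 1 : ℂ) • σ2 + (v 2 : ℂ) • σ3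

/-- The quadratic form of `½(t·1 + v·σ)` is nonneg when `‖v‖ ≤ t`. -/
lemma quad_nonneg (t v0 v1 v2 n : ℝ) (hn : 0 ≤ n) (h2 : n^2 = v0^2+v1^2+v2^2) (h : n ≤ t)
    (p q r s : ℝ) :
    0 ≤ p * ((t + v2) / 2 * p + (v0 / 2 * r - -v1 / 2 * s)) +
        q * ((t + v2) / 2 * q + (v0 / 2 * s + -v1 / 2 * r)) +
      (r * (v0 / 2 * p - v1 / 2 * q + (t - v2) / 2 * r) +
        s * (v0 / 2 * q + v1 / 2 * p + (t - v2) / 2 * s)) := by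
  obtain ⟨S, hS⟩ : ∃ S : ℝ, S = p^2+q^2+r^2+s^2 := ⟨_, rfl⟩
  obtain ⟨E, hE⟩ : ∃ E : ℝ, E = p^2+q^2-r^2-s^2 := ⟨_, rfl⟩
  obtain ⟨R, hR⟩ : ∃ R : ℝ, R = p*r+q*s := ⟨_, rfl⟩
  obtain ⟨Q, hQ⟩ : ∃ Q : ℝ, Q = p*s-q*r := ⟨_, rfl⟩
  have hS0 : 0 ≤ S := by rw [hS]; positivity
  have h2' : n^2*S^2 = (v0^2+v1^2+v2^2)*S^2 := by rw [h2]
  have hid : (v0^2+v1^2+v2^2)*(E^2+4*R^2+4*Q^2) = (v0^2+v1^2+v2^2)*S^2 := by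
    rw [hS, hE, hR, hQ]; ring
  have hCS : (v2*E + 2*v0*R + 2*v1*Q)^2 ≤ (n*S)^2 := by
    nlinarith [sq_nonneg (v0*E - 2*v2*R), sq_nonneg (v1*E - 2*v2*Q),
      sq_nonneg (2*v0*Q - 2*v1*R), h2', hid]
  have h4 := abs_le_of_sq_le_sq' hCS (mul_nonneg hn hS0)
  have h5 : 0 ≤ (t - n) * S := mul_nonneg (by linarith) hS0
  have key : 0 ≤ (t*S + (v2*E + 2*v0*R + 2*v1*Q)) / 2 := by nlinarith [h4.1]
  have eq : (t*S + (v2*E + 2*v0*R + 2*v1*Q)) / 2 =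
      p * ((t + v2) / 2 * p + (v0 / 2 * r - -v1 / 2 * s)) +
        q * ((t + v2) / 2 * q + (v0 / 2 * s + -v1 / 2 * r)) +
      (r * (v0 / 2 * p - v1 / 2 * q + (t - v2) / 2 * r) +
        s * (v0 / 2 * q + v1 / 2 * p + (t - v2) / 2 * s)) := by
    rw [hS, hE, hR, hQ]; ring
  linarith [key, eq.le, eq.ge]

/-- Explicit 2×2 positivity criterion. -/
lemma key' (t v0 v1 v2 n : ℝ) (hn : 0 ≤ n) (h2 : n^2 = v0^2+v1^2+v2^2) :
    (!![(((t + v2)/2 : ℝ) : ℂ), ((v0 : ℂ) - (v1 : ℂ)*I)/2;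
        ((v0 : ℂ) + (v1 : ℂ)*I)/2, (((t - v2)/2 : ℝ) : ℂ)]).PosSemidef ↔ n ≤ t := by
  rw [Matrix.posSemidef_iff_dotProduct_mulVec]
  constructor
  · rintro ⟨_, hq⟩
    have h0 := hq ![1, 0]
    have h1 := hq ![0, 1]
    have h3 := hq ![(v2 - n : ℂ), (v0 : ℂ) + v1*I]
    simp [dotProduct, Matrix.mulVec, Fin.sum_univ_two, Complex.le_def,
      Complex.ext_iff] at h0 h1 h3
    have hv2 : v2 ≤ n := by nlinarith [sq_nonneg v0, sq_nonneg v1]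
    have key3 : 0 ≤ (t - n) * (n * (n - v2)) := by nlinarith [h3.1]
    rcases eq_or_lt_of_le hv2 with hc | hc
    · linarith [h1]
    · rcases eq_or_lt_of_le hn with hc0 | hc0
      · nlinarith [sq_nonneg v0, sq_nonneg v1, sq_nonneg v2]
      · nlinarith [mul_pos hc0 (sub_pos.2 hc)]
  · intro h
    refine ⟨?_, ?_⟩
    · ext i j
      fin_cases i <;> fin_cases j <;>
        simp [Matrix.conjTranspose_apply, Complex.ext_iff]
    · intro x
      obtain ⟨p, q, hx0⟩ : ∃ p q : ℝ, x 0 = ⟨p, q⟩ := ⟨(x 0).re, (x 0).im, rfl⟩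
      obtain ⟨r, s, hx1⟩ : ∃ r s : ℝ, x 1 = ⟨r, s⟩ := ⟨(x 1).re, (x 1).im, rfl⟩
      simp [dotProduct, Matrix.mulVec, Fin.sum_univ_two, Complex.le_def,
        Complex.ext_iff, hx0, hx1]
      exact ⟨quad_nonneg t v0 v1 v2 n hn h2 h p q r s, by ring⟩

/-- `½(t·1 + v·σ) ≥ 0 ↔ ‖v‖ ≤ t`. -/
lemma key'' (t : ℝ) (v : EuclideanSpace ℝ (Fin 3)) :
    ((1/2 : ℂ) • ((t:ℂ) • (1 : Matrix (Fin 2) (Fin 2) ℂ) + dotσ v)).PosSemidef ↔ ‖v‖ ≤ t := by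
  have hm : (1/2 : ℂ) • ((t:ℂ) • (1 : Matrix (Fin 2) (Fin 2) ℂ) + dotσ v) =
      !![(((t + v 2)/2 : ℝ) : ℂ), ((v 0 : ℂ) - (v 1 : ℂ)*I)/2;
         ((v 0 : ℂ) + (v 1 : ℂ)*I)/2, (((t - v 2)/2 : ℝ) : ℂ)] := by
    ext i j
    fin_cases i <;> fin_cases j <;>
      simp [dotσ, σ1, σ2, σ3, Matrix.one_apply] <;> ring
  have h2 : ‖v‖^2 = (v 0)^2 + (v 1)^2 + (v 2)^2 := by
    rw [EuclideanSpace.norm_eq, Real.sq_sqrt (by positivity)]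
    simp [Fin.sum_univ_three, sq_abs]
  rw [hm]
  exact key' t (v 0) (v 1) (v 2) ‖v‖ (norm_nonneg v) h2

lemma dotσ_sub (a g : EuclideanSpace ℝ (Fin 3)) : dotσ (a - g) = dotσ a - dotσ g := by
  simp only [dotσ, PiLp.sub_apply, Complex.ofReal_sub, sub_smul]
  abel

/-- The four effects of the candidate joint observable `G_{γ,g}` of two dichotomic qubit
observables are positive semidefinite iff the four norm inequalities hold. -/
theorem qubit_joint_posSemidef_iff (α β γ : ℝ) (a b g : EuclideanSpace ℝ (Fin 3))
    (hα : α ∈ Set.Icc (0 : ℝ) 2) (hβ : β ∈ Set.Icc (0 : ℝ) 2)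
    (ha : ‖a‖ ≤ min α (2 - α)) (hb : ‖b‖ ≤ min β (2 - β)) :
    (((1 / 2 : ℂ) • ((γ : ℂ) • (1 : Matrix (Fin 2) (Fin 2) ℂ) + dotσ g)).PosSemidef ∧
     ((1 / 2 : ℂ) • ((α : ℂ) • (1 : Matrix (Fin 2) (Fin 2) ℂ) + dotσ a) -
       (1 / 2 : ℂ) • ((γ : ℂ) • (1 : Matrix (Fin 2) (Fin 2) ℂ) + dotσ g)).PosSemidef ∧
     ((1 / 2 : ℂ) • ((β : ℂ) • (1 : Matrix (Fin 2) (Fin 2) ℂ) + dotσ b) -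
       (1 / 2 : ℂ) • ((γ : ℂ) • (1 : Matrix (Fin 2) (Fin 2) ℂ) + dotσ g)).PosSemidef ∧
     ((1 : Matrix (Fin 2) (Fin 2) ℂ) +
       (1 / 2 : ℂ) • ((γ : ℂ) • (1 : Matrix (Fin 2) (Fin 2) ℂ) + dotσ g) -
       (1 / 2 : ℂ) • ((α : ℂ) • (1 : Matrix (Fin 2) (Fin 2) ℂ) + dotσ a) -
       (1 / 2 : ℂ) • ((β : ℂ) • (1 : Matrix (Fin 2) (Fin 2) ℂ) + dotσ b)).PosSemidef) ↔
    (‖g‖ ≤ γ ∧ ‖a - g‖ ≤ α - γ ∧ ‖b - g‖ ≤ β - γ ∧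
      ‖a + b - g‖ ≤ 2 + γ - α - β) := by
  have e2 : (1/2 : ℂ) • ((α:ℂ) • (1 : Matrix (Fin 2) (Fin 2) ℂ) + dotσ a) -
      (1/2 : ℂ) • ((γ:ℂ) • (1 : Matrix (Fin 2) (Fin 2) ℂ) + dotσ g) =
      (1/2 : ℂ) • (((α - γ : ℝ):ℂ) • (1 : Matrix (Fin 2) (Fin 2) ℂ) + dotσ (a - g)) := by
    rw [dotσ_sub]; push_cast; module
  have e3 : (1/2 : ℂ) • ((β:ℂ) • (1 : Matrix (Fin 2) (Fin 2) ℂ) + dotσ b) -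
      (1/2 : ℂ) • ((γ:ℂ) • (1 : Matrix (Fin 2) (Fin 2) ℂ) + dotσ g) =
      (1/2 : ℂ) • (((β - γ : ℝ):ℂ) • (1 : Matrix (Fin 2) (Fin 2) ℂ) + dotσ (b - g)) := by
    rw [dotσ_sub]; push_cast; module
  have e4 : (1 : Matrix (Fin 2) (Fin 2) ℂ) +
      (1/2 : ℂ) • ((γ:ℂ) • (1 : Matrix (Fin 2) (Fin 2) ℂ) + dotσ g) -
      (1/2 : ℂ) • ((α:ℂ) • (1 : Matrix (Fin 2) (Fin 2) ℂ) + dotσ a) -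
      (1/2 : ℂ) • ((β:ℂ) • (1 : Matrix (Fin 2) (Fin 2) ℂ) + dotσ b) =
      (1/2 : ℂ) • (((2 + γ - α - β : ℝ):ℂ) • (1 : Matrix (Fin 2) (Fin 2) ℂ)
        + dotσ (g - a - b)) := by
    rw [dotσ_sub, dotσ_sub]; push_cast; module
  have hneg : ‖g - a - b‖ = ‖a + b - g‖ := by
    rw [show g - a - b = -(a + b - g) by abel, norm_neg]
  rw [e2, e3, e4, key'', key'', key'', key'', hneg]
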